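/- Let R be a commutative ring, V a free R-module of rank n, and τ ∈ End_R(V) cyclic. Then the characteristic polynomial P_τ generates the annihilator ideal {f ∈ R[X] : f(τ) = 0}. -/

import Mathlib

/-- Let `R` be a commutative ring and `τ` a cyclic endomorphism of a free `R`-module of rank
`n` (realized as a matrix).  Then the characteristic polynomial `P_τ` generates the annihilator
ideal `{f ∈ R[X] : f(τ) = 0}`. -/
theorem stmt_3 {R : Type*} [CommRing R] (n : ℕ) (τ : Matrix (Fin n) (Fin n) R)
    (h : ∃ v : Fin n → R, ∀ w : Fin n → R,
      ∃ p : Polynomial R, (Polynomial.aeval τ p).mulVec v = w) :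
    ∀ f : Polynomial R, Polynomial.aeval τ f = 0 ↔ τ.charpoly ∣ f := by
  obtain ⟨v, hv⟩ := h
  have hch : (Polynomial.aeval τ) τ.charpoly = 0 := τ.aeval_self_charpoly
  have hmonic := τ.charpoly_monic
  intro f
  constructor
  swap
  · rintro ⟨g, rfl⟩
    rw [map_mul, hch, zero_mul]
  intro hf
  rcases subsingleton_or_nontrivial R with hR | hR
  · exact ⟨0, Subsingleton.elim _ _⟩
  rw [← Polynomial.modByMonic_eq_zero_iff_dvd hmonic]
  set r := f %ₘ τ.charpoly with hrdef
  have hre : Polynomial.aeval τ r = 0 := by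
    have h1 : r = f - τ.charpoly * (f /ₘ τ.charpoly) :=
      Polynomial.modByMonic_eq_sub_mul_div f τ.charpoly
    rw [h1, map_sub, map_mul, hch, hf, zero_mul, sub_zero]
  have hdeg : r.degree < (n : WithBot ℕ) := by
    have := Polynomial.degree_modByMonic_lt f hmonic
    rwa [Matrix.charpoly_degree_eq_dim, Fintype.card_fin] at this
  by_cases hr0 : r = 0
  · exact hr0
  have hndeg : r.natDegree < n := by
    rwa [Polynomial.natDegree_lt_iff_degree_lt hr0]
  rcases Nat.eq_zero_or_pos n with rfl | hn
  · omega
  set M : Matrix (Fin n) (Fin n) R :=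
    Matrix.of fun j i => (τ ^ (i : ℕ)).mulVec v j with hM
  have key : ∀ p : Polynomial R, p.natDegree < n →
      (Polynomial.aeval τ p).mulVec v = M.mulVec fun i => p.coeff i := by
    intro p hp
    rw [Polynomial.aeval_eq_sum_range' hp]
    funext j
    simp only [Matrix.mulVec, dotProduct, hM, Matrix.of_apply,
      Matrix.sum_apply, Matrix.smul_apply, smul_eq_mul, Finset.sum_mul,
      Finset.mul_sum]
    conv_lhs => rw [Finset.sum_comm]
    rw [← Fin.sum_univ_eq_sum_range
      (fun i => ∑ k : Fin n, p.coeff i * (τ ^ i) j k * v k) n]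
    apply Finset.sum_congr rfl
    intro i _
    apply Finset.sum_congr rfl
    intro k _
    ring
  have hsurj : Function.Surjective M.mulVecLin := by
    intro w
    obtain ⟨p, hp⟩ := hv w
    set p' := p %ₘ τ.charpoly with hp'def
    have hpe : Polynomial.aeval τ p' = Polynomial.aeval τ p := by
      have h1 : p' = p - τ.charpoly * (p /ₘ τ.charpoly) :=
        Polynomial.modByMonic_eq_sub_mul_div p τ.charpoly
      rw [h1, map_sub, map_mul, hch, zero_mul, sub_zero]
    have hpd : p'.natDegree < n := by
      by_cases hp0 : p' = 0
      · rw [hp0]; simpa using hn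
      · have := Polynomial.degree_modByMonic_lt p hmonic
        rw [Matrix.charpoly_degree_eq_dim, Fintype.card_fin] at this
        rwa [Polynomial.natDegree_lt_iff_degree_lt hp0]
    exact ⟨fun i => p'.coeff i, by
      rw [Matrix.mulVecLin_apply, ← key p' hpd, hpe, hp]⟩
  have hinj : Function.Injective M.mulVecLin :=
    OrzechProperty.injective_of_surjective_endomorphism M.mulVecLin hsurj
  have hc : (fun i : Fin n => r.coeff i) = 0 := by
    apply hinj
    rw [map_zero, Matrix.mulVecLin_apply, ← key r hndeg, hre, Matrix.zero_mulVec]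
  exfalso
  apply hr0
  ext k
  by_cases hk : k < n
  · simpa using congrFun hc ⟨k, hk⟩
  · simp [Polynomial.coeff_eq_zero_of_natDegree_lt (lt_of_lt_of_le hndeg (le_of_not_gt hk))]
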